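/- Linear dependence of a bounded and a square-summable generalized eigenfunction: let λ ∈ ℂ and suppose u₁, u₂ : ℤ → ℂ² both satisfy (Uu_j)(x) = e^{iλ}u_j(x) for all x ∈ ℤ. If u₁ is bounded on {x ∈ ℤ : x ≥ 0} and ∑_{x∈ℤ} ‖u₂(x)‖² < ∞, then u₁ and u₂ are linearly dependent, i.e. there exist c₁, c₂ ∈ ℂ, not both zero, with c₁u₁(x) + c₂u₂(x) = 0 for all x ∈ ℤ. -/

import Mathlib

open Complex

private lemma qw_unique (α : ℤ → ℂ) (ρ : ℤ → ℝ) (hρ0 : ∀ x : ℤ, (ρ x : ℂ) ≠ 0)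
    (E : ℂ) (hE : E ≠ 0) (w : ℤ → ℂ × ℂ)
    (hw : ∀ x : ℤ,
      (ρ (x - 1) : ℂ) * (w (x - 1)).1 + (starRingEnd ℂ) (α (x - 1)) * (w (x - 1)).2
          = E * (w x).1 ∧
        -(α (x + 1)) * (w (x + 1)).1 + (ρ (x + 1) : ℂ) * (w (x + 1)).2
          = E * (w x).2)
    (h0 : w 0 = 0) : ∀ x : ℤ, w x = 0 := by
  intro x
  induction x using Int.induction_on with
  | zero => exact h0
  | succ i ih =>
    have h1 := (hw (i + 1)).1
    rw [add_sub_cancel_right, ih] at h1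
    simp only [Prod.fst_zero, Prod.snd_zero, mul_zero, add_zero] at h1
    have hw1 : (w (i + 1 : ℤ)).1 = 0 := by
      rcases mul_eq_zero.mp h1.symm with h | h
      · exact absurd h hE
      · exact h
    have h2 := (hw i).2
    rw [ih, hw1] at h2
    simp only [Prod.snd_zero, mul_zero, neg_mul, neg_zero, zero_add] at h2
    have hw2 : (w (i + 1 : ℤ)).2 = 0 := by
      rcases mul_eq_zero.mp h2 with h | h
      · exact absurd h (hρ0 _)
      · exact h
    exact Prod.ext hw1 hw2
  | pred i ih =>
    have h2 := (hw (-i - 1)).2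
    rw [sub_add_cancel, ih] at h2
    simp only [Prod.fst_zero, Prod.snd_zero, mul_zero, neg_mul, neg_zero, zero_add,
      add_zero] at h2
    have hw2 : (w (-i - 1 : ℤ)).2 = 0 := by
      rcases mul_eq_zero.mp h2.symm with h | h
      · exact absurd h hE
      · exact h
    have h1 := (hw (-i)).1
    rw [ih, hw2] at h1
    simp only [Prod.fst_zero, mul_zero, add_zero] at h1
    have hw1 : (w (-i - 1 : ℤ)).1 = 0 := by
      rcases mul_eq_zero.mp h1 with h | h
      · exact absurd h (hρ0 _)
      · exact h
    exact Prod.ext hw1 hw2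

/-- A generalized eigenfunction that is bounded on `{x ≥ 0}` and a square-summable
generalized eigenfunction of the quantum walk `U` (for the same eigenvalue `e^{iλ}`)
are linearly dependent. -/
theorem bounded_and_l2_eigenfunctions_linearly_dependent
    (α : ℤ → ℂ) (h01 : ∀ x : ℤ, 0 < ‖α x‖) (h02 : ∀ x : ℤ, ‖α x‖ < 1)
    (ρ : ℤ → ℝ) (hρ : ∀ x : ℤ, ρ x = Real.sqrt (1 - ‖α x‖ ^ 2))
    (lam : ℂ) (u₁ u₂ : ℤ → ℂ × ℂ)
    (heig₁ : ∀ x : ℤ,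
      (ρ (x - 1) : ℂ) * (u₁ (x - 1)).1 + (starRingEnd ℂ) (α (x - 1)) * (u₁ (x - 1)).2
          = Complex.exp (Complex.I * lam) * (u₁ x).1 ∧
        -(α (x + 1)) * (u₁ (x + 1)).1 + (ρ (x + 1) : ℂ) * (u₁ (x + 1)).2
          = Complex.exp (Complex.I * lam) * (u₁ x).2)
    (heig₂ : ∀ x : ℤ,
      (ρ (x - 1) : ℂ) * (u₂ (x - 1)).1 + (starRingEnd ℂ) (α (x - 1)) * (u₂ (x - 1)).2
          = Complex.exp (Complex.I * lam) * (u₂ x).1 ∧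
        -(α (x + 1)) * (u₂ (x + 1)).1 + (ρ (x + 1) : ℂ) * (u₂ (x + 1)).2
          = Complex.exp (Complex.I * lam) * (u₂ x).2)
    (hbdd : ∃ M : ℝ, ∀ x : ℤ, 0 ≤ x → ‖u₁ x‖ ≤ M)
    (hl2 : Summable fun x : ℤ => ‖u₂ x‖ ^ 2) :
    ∃ c₁ c₂ : ℂ, (c₁ ≠ 0 ∨ c₂ ≠ 0) ∧ ∀ x : ℤ, c₁ • u₁ x + c₂ • u₂ x = 0 := by
  obtain ⟨M, hM⟩ := hbdd
  set E := Complex.exp (Complex.I * lam) with hEdef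
  have hE : E ≠ 0 := Complex.exp_ne_zero _
  have hρpos : ∀ x : ℤ, 0 < ρ x := by
    intro x
    rw [hρ x]
    apply Real.sqrt_pos.mpr
    nlinarith [h02 x, norm_nonneg (α x)]
  have hρ0 : ∀ x : ℤ, (ρ x : ℂ) ≠ 0 := fun x => Complex.ofReal_ne_zero.mpr (hρpos x).ne'
  have hρ1 : ∀ x : ℤ, ρ x ≤ 1 := by
    intro x
    rw [hρ x]
    calc Real.sqrt (1 - ‖α x‖ ^ 2) ≤ Real.sqrt 1 :=
          Real.sqrt_le_sqrt (by nlinarith [h01 x])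
      _ = 1 := Real.sqrt_one
  -- the Wronskian
  set W : ℤ → ℂ := fun x => (u₁ x).1 * (u₂ x).2 - (u₁ x).2 * (u₂ x).1 with hWdef
  have hWstep : ∀ x : ℤ, (ρ (x + 1) : ℂ) * W (x + 1) = (ρ x : ℂ) * W x := by
    intro x
    have Haa := (heig₁ (x + 1)).1
    rw [add_sub_cancel_right] at Haa
    have Hab := (heig₂ (x + 1)).1
    rw [add_sub_cancel_right] at Hab
    have Hba := (heig₁ x).2
    have Hbb := (heig₂ x).2
    apply mul_left_cancel₀ hE
    simp only [hWdef]
    linear_combination (E * (u₁ (x + 1)).1) * Hbb - (E * (u₂ (x + 1)).1) * Hba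
      - (E * (u₂ x).2) * Haa + (E * (u₁ x).2) * Hab
  have hWconst : ∀ n : ℕ, (ρ (n : ℤ) : ℂ) * W (n : ℤ) = (ρ 0 : ℂ) * W 0 := by
    intro n
    induction n with
    | zero => norm_num
    | succ k ih =>
      have := hWstep (k : ℤ)
      rw [ih] at this
      rw [show ((k + 1 : ℕ) : ℤ) = (k : ℤ) + 1 by push_cast; ring]
      exact this
  have hM0 : 0 ≤ M := le_trans (norm_nonneg _) (hM 0 le_rfl)
  -- bound on the constant
  have hbound : ∀ n : ℕ, ‖(ρ 0 : ℂ) * W 0‖ ≤ 2 * M * ‖u₂ (n : ℤ)‖ := by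
    intro n
    rw [← hWconst n, norm_mul, Complex.norm_real]
    have h1 : ‖(u₁ (n : ℤ)).1‖ ≤ M :=
      le_trans (norm_fst_le _) (hM _ (Int.natCast_nonneg n))
    have h2 : ‖(u₁ (n : ℤ)).2‖ ≤ M :=
      le_trans (norm_snd_le _) (hM _ (Int.natCast_nonneg n))
    have h3 : ‖(u₂ (n : ℤ)).1‖ ≤ ‖u₂ (n : ℤ)‖ := norm_fst_le _
    have h4 : ‖(u₂ (n : ℤ)).2‖ ≤ ‖u₂ (n : ℤ)‖ := norm_snd_le _
    have hWn : ‖W (n : ℤ)‖ ≤ 2 * M * ‖u₂ (n : ℤ)‖ := by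
      calc ‖W (n : ℤ)‖ ≤ ‖(u₁ (n : ℤ)).1 * (u₂ (n : ℤ)).2‖
            + ‖(u₁ (n : ℤ)).2 * (u₂ (n : ℤ)).1‖ := norm_sub_le _ _
        _ = ‖(u₁ (n : ℤ)).1‖ * ‖(u₂ (n : ℤ)).2‖
            + ‖(u₁ (n : ℤ)).2‖ * ‖(u₂ (n : ℤ)).1‖ := by rw [norm_mul, norm_mul]
        _ ≤ M * ‖u₂ (n : ℤ)‖ + M * ‖u₂ (n : ℤ)‖ := by
            gcongr <;> first | exact norm_nonneg _ | assumption
        _ = 2 * M * ‖u₂ (n : ℤ)‖ := by ring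
    have hra : |ρ (n : ℤ)| ≤ 1 := by
      rw [abs_of_pos (hρpos _)]; exact hρ1 _
    calc |ρ (n : ℤ)| * ‖W (n : ℤ)‖ ≤ 1 * ‖W (n : ℤ)‖ :=
          mul_le_mul_of_nonneg_right hra (norm_nonneg _)
      _ = ‖W (n : ℤ)‖ := one_mul _
      _ ≤ 2 * M * ‖u₂ (n : ℤ)‖ := hWn
  -- u₂ tends to zero
  have htend : Filter.Tendsto (fun n : ℕ => ‖u₂ (n : ℤ)‖) Filter.atTop (nhds 0) := by
    have h1 := hl2.tendsto_cofinite_zero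
    have h2 : Filter.Tendsto (fun n : ℕ => (n : ℤ)) Filter.cofinite Filter.cofinite :=
      Function.Injective.tendsto_cofinite (fun a b h => by exact_mod_cast h)
    have h3 := h1.comp h2
    rw [Nat.cofinite_eq_atTop] at h3
    have h4 : Filter.Tendsto (fun n : ℕ => Real.sqrt (‖u₂ (n : ℤ)‖ ^ 2))
        Filter.atTop (nhds (Real.sqrt 0)) :=
      (Real.continuous_sqrt.continuousAt).tendsto.comp h3
    simpa [Real.sqrt_sq (norm_nonneg _)] using h4
  have hW0 : W 0 = 0 := by
    have hlim : Filter.Tendsto (fun n : ℕ => 2 * M * ‖u₂ (n : ℤ)‖)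
        Filter.atTop (nhds (2 * M * 0)) := htend.const_mul _
    have hle : ‖(ρ 0 : ℂ) * W 0‖ ≤ 2 * M * 0 :=
      ge_of_tendsto hlim (Filter.Eventually.of_forall hbound)
    have : (ρ 0 : ℂ) * W 0 = 0 := by
      rw [← norm_le_zero_iff]
      linarith
    rcases mul_eq_zero.mp this with h | h
    · exact absurd h (hρ0 _)
    · exact h
  -- eigen-equation for linear combinations
  have hcomb : ∀ c₁ c₂ : ℂ, ∀ x : ℤ,
      (ρ (x - 1) : ℂ) * ((c₁ • u₁ (x - 1) + c₂ • u₂ (x - 1))).1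
          + (starRingEnd ℂ) (α (x - 1)) * ((c₁ • u₁ (x - 1) + c₂ • u₂ (x - 1))).2
          = E * ((c₁ • u₁ x + c₂ • u₂ x)).1 ∧
        -(α (x + 1)) * ((c₁ • u₁ (x + 1) + c₂ • u₂ (x + 1))).1
          + (ρ (x + 1) : ℂ) * ((c₁ • u₁ (x + 1) + c₂ • u₂ (x + 1))).2
          = E * ((c₁ • u₁ x + c₂ • u₂ x)).2 := by
    intro c₁ c₂ x
    constructor
    · simp only [Prod.fst_add, Prod.smul_fst, Prod.snd_add, Prod.smul_snd, smul_eq_mul]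
      linear_combination c₁ * (heig₁ x).1 + c₂ * (heig₂ x).1
    · simp only [Prod.fst_add, Prod.smul_fst, Prod.snd_add, Prod.smul_snd, smul_eq_mul]
      linear_combination c₁ * (heig₁ x).2 + c₂ * (heig₂ x).2
  by_cases hb : u₂ 0 = 0
  · refine ⟨0, 1, Or.inr one_ne_zero, fun x => ?_⟩
    have := qw_unique α ρ hρ0 E hE u₂ heig₂ hb x
    simp [this]
  · have hW0' : (u₁ 0).1 * (u₂ 0).2 - (u₁ 0).2 * (u₂ 0).1 = 0 := hW0
    by_cases hb1 : (u₂ 0).1 = 0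
    · have hb2 : (u₂ 0).2 ≠ 0 := by
        intro h; exact hb (Prod.ext hb1 h)
      refine ⟨(u₂ 0).2, -(u₁ 0).2, Or.inl hb2, ?_⟩
      apply qw_unique α ρ hρ0 E hE _ (hcomb _ _)
      apply Prod.ext
      · simp only [Prod.fst_add, Prod.smul_fst, smul_eq_mul, Prod.fst_zero]
        linear_combination hW0'
      · simp only [Prod.snd_add, Prod.smul_snd, smul_eq_mul, Prod.snd_zero]
        ring
    · refine ⟨(u₂ 0).1, -(u₁ 0).1, Or.inl hb1, ?_⟩
      apply qw_unique α ρ hρ0 E hE _ (hcomb _ _)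
      apply Prod.ext
      · simp only [Prod.fst_add, Prod.smul_fst, smul_eq_mul, Prod.fst_zero]
        ring
      · simp only [Prod.snd_add, Prod.smul_snd, smul_eq_mul, Prod.snd_zero]
        linear_combination -hW0'
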